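/- arXiv:1602.01283 — 3 statements merged into one kernel-verified Lean document; each statement's English description precedes it below -/
import Mathlib

section
/- Let W, W₁, W₂, … be i.i.d. nonnegative random variables with E[W^β] < ∞ for all β < α, where 1 < α < 2, and let (aₙ) be a regularly varying sequence of index 1/α with aₙ → ∞ and 1/aₙ = o(n^{−1/α+γ}) for every γ > 0. Then (1/aₙ)·(∑_{i=1}^n W_i²)/L_n → 0 almost surely, where L_n = ∑_{i=1}^n W_i and E[W] > 0. -/
open MeasureTheory ProbabilityTheory Filter Topology Finset Asymptotics

/-- `h` is slowly varying at infinity. -/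
def SlowlyVarying (h : ℝ → ℝ) : Prop :=
  ∀ t : ℝ, 0 < t → Tendsto (fun x => h (t * x) / h x) atTop (𝓝 1)

/-- A positive sequence is regularly varying of index `ρ`. -/
def RegularlyVaryingSeq (a : ℕ → ℝ) (ρ : ℝ) : Prop :=
  ∃ ℓ : ℝ → ℝ, SlowlyVarying ℓ ∧ (∀ᶠ x in atTop, 0 < ℓ x) ∧
    ∀ᶠ n in atTop, a n = (n : ℝ) ^ ρ * ℓ n

private lemma aux_add_rpow_le {a b r : ℝ} (ha : 0 ≤ a) (hb : 0 ≤ b) (hr : 1 ≤ r) :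
    a ^ r + b ^ r ≤ (a + b) ^ r := by
  lift a to NNReal using ha
  lift b to NNReal using hb
  have := NNReal.add_rpow_le_rpow_add a b hr
  exact_mod_cast this

private lemma aux_sum_rpow_le {ι : Type*} (t : Finset ι) (f : ι → ℝ)
    (hf : ∀ i ∈ t, 0 ≤ f i) {r : ℝ} (hr : 1 ≤ r) :
    ∑ i ∈ t, f i ^ r ≤ (∑ i ∈ t, f i) ^ r := by
  induction t using Finset.cons_induction with
  | empty => simp [Real.zero_rpow (by positivity : r ≠ 0)]
  | cons a t hat ih =>
    rw [Finset.sum_cons, Finset.sum_cons]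
    have h1 : 0 ≤ f a := hf a (Finset.mem_cons_self _ _)
    have h2 : 0 ≤ ∑ i ∈ t, f i :=
      Finset.sum_nonneg fun i hi => hf i (Finset.mem_cons_of_mem hi)
    calc f a ^ r + ∑ i ∈ t, f i ^ r
        ≤ f a ^ r + (∑ i ∈ t, f i) ^ r := by
          exact add_le_add (le_refl _) (ih fun i hi => hf i (Finset.mem_cons_of_mem hi))
      _ ≤ (f a + ∑ i ∈ t, f i) ^ r := aux_add_rpow_le h1 h2 hr

theorem stmt_8 {Ω : Type*} [MeasurableSpace Ω] (μ : Measure Ω) [IsProbabilityMeasure μ]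
    (W : ℕ → Ω → ℝ) (hmeas : ∀ i, Measurable (W i))
    (hnonneg : ∀ i, ∀ᵐ ω ∂μ, 0 ≤ W i ω)
    (hindep : iIndepFun W μ)
    (hident : ∀ i, IdentDistrib (W i) (W 0) μ μ)
    (α : ℝ) (hα1 : 1 < α) (hα2 : α < 2)
    (hmom : ∀ β : ℝ, β < α → Integrable (fun ω => (W 0 ω) ^ β) μ)
    (hEW : 0 < ∫ ω, W 0 ω ∂μ)
    (a : ℕ → ℝ) (ha : RegularlyVaryingSeq a (1 / α))
    (hainf : Tendsto a atTop atTop)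
    (halittle : ∀ γ : ℝ, 0 < γ →
      (fun n : ℕ => 1 / a n) =o[atTop] fun n : ℕ => (n : ℝ) ^ (-(1 / α) + γ)) :
    ∀ᵐ ω ∂μ, Tendsto (fun n : ℕ =>
        (1 / a n) * (∑ i ∈ range n, (W i ω) ^ 2) / (∑ i ∈ range n, W i ω))
      atTop (𝓝 0) := by
  have hα0 : (0:ℝ) < α := by linarith
  set s : ℝ := 4 * α / (3 + α) with hs_def
  have h3α : (0:ℝ) < 3 + α := by linarith
  have hs0 : 0 < s := by positivity
  have hsα : s < α := by
    rw [hs_def, div_lt_iff₀ h3α]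
    nlinarith
  have hs2 : s ≤ 2 := by linarith
  have hr1 : (1:ℝ) ≤ 2 / s := by
    rw [le_div_iff₀ hs0]; linarith
  set γ : ℝ := (α - 1) / (4 * α) with hγ_def
  have hγ0 : 0 < γ := div_pos (by linarith) (by positivity)
  set ee : ℝ := (1 - α) / (4 * α) with hee_def
  have hee_neg : ee < 0 := div_neg_of_neg_of_pos (by linarith) (by positivity)
  have hee_eq : -(1 / α) + γ + 2 / s + -1 = ee := by
    rw [hγ_def, hee_def, hs_def]
    field_simp
    ring
  -- measurability of x ↦ x ^ s
  have hg : Measurable fun x : ℝ => x ^ s :=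
    (Continuous.rpow_const continuous_id fun x => Or.inr hs0.le).measurable
  -- integrability
  have hint1 : Integrable (W 0) μ := by
    have := hmom 1 (by linarith)
    simpa [Real.rpow_one] using this
  have hint2 : Integrable (fun ω => W 0 ω ^ s) μ := hmom s hsα
  set m : ℝ := ∫ ω, W 0 ω ∂μ with hm_def
  set c : ℝ := ∫ ω, W 0 ω ^ s ∂μ with hc_def
  have hc0 : 0 ≤ c := by
    apply integral_nonneg_of_ae
    filter_upwards [hnonneg 0] with ω hω using Real.rpow_nonneg hω s
  -- strong laws of large numbers
  have hW1 : ∀ᵐ ω ∂μ, Tendsto (fun n : ℕ => (n : ℝ)⁻¹ • ∑ i ∈ range n, W i ω)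
      atTop (𝓝 m) :=
    strong_law_ae W hint1 (fun i j hij => hindep.indepFun hij) hident
  have hW2 : ∀ᵐ ω ∂μ, Tendsto (fun n : ℕ => (n : ℝ)⁻¹ • ∑ i ∈ range n, W i ω ^ s)
      atTop (𝓝 c) :=
    strong_law_ae (fun i ω => W i ω ^ s) hint2
      (fun i j hij => (hindep.indepFun hij).comp hg hg)
      (fun i => (hident i).comp hg)
  have hnn : ∀ᵐ ω ∂μ, ∀ i, 0 ≤ W i ω := ae_all_iff.2 hnonneg
  filter_upwards [hW1, hW2, hnn] with ω h1 h2 hw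
  simp only [smul_eq_mul] at h1 h2
  set L : ℕ → ℝ := fun n => ∑ i ∈ range n, W i ω with hL_def
  set T : ℕ → ℝ := fun n => ∑ i ∈ range n, W i ω ^ s with hT_def
  set S : ℕ → ℝ := fun n => ∑ i ∈ range n, (W i ω) ^ 2 with hS_def
  have hTnn : ∀ n, 0 ≤ T n := fun n =>
    Finset.sum_nonneg fun i _ => Real.rpow_nonneg (hw i) s
  have hSnn : ∀ n, 0 ≤ S n := fun n =>
    Finset.sum_nonneg fun i _ => sq_nonneg _
  -- key pointwise bound : S n ≤ (T n) ^ (2/s)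
  have hST : ∀ n, S n ≤ T n ^ (2 / s) := by
    intro n
    have : S n = ∑ i ∈ range n, (W i ω ^ s) ^ (2 / s) := by
      apply Finset.sum_congr rfl
      intro i _
      rw [← Real.rpow_natCast (W i ω) 2, ← Real.rpow_mul (hw i)]
      congr 1
      push_cast
      field_simp
    rw [this]
    exact aux_sum_rpow_le _ _ (fun i _ => Real.rpow_nonneg (hw i) s) hr1
  set C : ℝ := (c + 1) ^ (2 / s) * (2 / m) with hC_def
  -- the squeeze
  apply squeeze_zero' (g := fun n : ℕ => C * (n : ℝ) ^ ee)
  · -- eventual nonnegativity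
    filter_upwards [hainf.eventually_ge_atTop 1,
      h1.eventually (eventually_ge_nhds (by linarith : m / 2 < m))] with n han hLn
    have hL0 : 0 ≤ L n := by
      exact Finset.sum_nonneg fun i _ => hw i
    have : 0 ≤ 1 / a n := by positivity
    exact div_nonneg (mul_nonneg this (hSnn n)) hL0
  · -- eventual upper bound by C * n ^ ee
    have hb := ((halittle γ hγ0).bound zero_lt_one)
    filter_upwards [hainf.eventually_ge_atTop 1,
      h1.eventually (eventually_ge_nhds (by linarith : m / 2 < m)),
      h2.eventually (eventually_le_nhds (by linarith : c < c + 1)),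
      hb, eventually_ge_atTop 1] with n han hLn hTn hbn hn1
    have hn0 : (0:ℝ) < n := by exact_mod_cast hn1
    have hLnn : m / 2 * n ≤ L n := by
      rw [inv_mul_eq_div, le_div_iff₀ hn0] at hLn
      exact hLn
    have hLpos : 0 < L n := lt_of_lt_of_le (by positivity) hLnn
    have hTle : T n ≤ (c + 1) * n := by
      rw [inv_mul_eq_div, div_le_iff₀ hn0] at hTn
      exact hTn
    have hanle : 1 / a n ≤ (n:ℝ) ^ (-(1/α) + γ) := by
      rw [Real.norm_eq_abs, Real.norm_eq_abs, one_mul] at hbn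
      calc 1 / a n ≤ |1 / a n| := le_abs_self _
        _ ≤ |(n:ℝ) ^ (-(1/α) + γ)| := hbn
        _ = (n:ℝ) ^ (-(1/α) + γ) :=
            abs_of_nonneg (Real.rpow_nonneg (Nat.cast_nonneg n) _)
    have hSle : S n ≤ ((c + 1) * n) ^ (2 / s) :=
      (hST n).trans (Real.rpow_le_rpow (hTnn n) hTle (by positivity))
    have hnum : 1 / a n * S n ≤ (n:ℝ) ^ (-(1/α) + γ) * ((c + 1) * n) ^ (2 / s) := by
      apply mul_le_mul hanle hSle (hSnn n) (Real.rpow_nonneg (Nat.cast_nonneg n) _)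
    have hdiv : 1 / a n * S n / L n ≤
        (n:ℝ) ^ (-(1/α) + γ) * ((c + 1) * n) ^ (2 / s) / (m / 2 * n) :=
      div_le_div₀ (by positivity) hnum (by positivity) hLnn
    refine hdiv.trans (le_of_eq ?_)
    have hnpow : (n:ℝ) ^ ee = (n:ℝ) ^ (-(1/α) + γ) * (n:ℝ) ^ (2/s) * (n:ℝ) ^ (-1:ℝ) := by
      rw [← Real.rpow_add hn0, ← Real.rpow_add hn0, hee_eq]
    rw [Real.mul_rpow (by linarith) hn0.le, hC_def, hnpow, Real.rpow_neg_one]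
    field_simp
  · -- C * n ^ ee → 0
    have h0 : Tendsto (fun x : ℝ => x ^ ee) atTop (𝓝 0) := by
      have := tendsto_rpow_neg_atTop (show 0 < -ee by linarith)
      simpa using this
    have := (h0.comp tendsto_natCast_atTop_atTop).const_mul C
    simpa using this
end

section
/- Let W₁, W₂ be independent nonnegative random variables each with tail P(W > x) ~ c·x^{−α}·h(x) for some c > 0, α ∈ (1,2), and slowly varying h, and suppose there is δ > 0 with 2 − α − 1/α + 2δ < 0 and constants c₁ > 0 such that E[W²·1{W ≤ x}] ≤ c₁·x^{2−α+δ} and E[W·1{W ≥ x}] ≤ c₁·x^{1−α+δ} for all x > 1. If (aₙ) satisfies 1/aₙ = o(n^{−1/α+δ}), then (1/aₙ)·E[W₁²W₂²·1{W₁W₂ ≤ n}] → 0 as n → ∞. -/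
open MeasureTheory ProbabilityTheory Filter Topology Asymptotics Set

section Aux


lemma tail_bound {Ω : Type*} [MeasurableSpace Ω] (μ : Measure Ω) [IsProbabilityMeasure μ]
    (W : Ω → ℝ) (hW : Measurable W) (c₁ α δ : ℝ) (hc₁ : 0 < c₁) (hδα : δ < α) (hnn : ∀ᵐ ω ∂μ, 0 ≤ W ω)
    (hmom2 : ∀ x : ℝ, 1 < x →
      (∫ ω in {ω | W ω ≤ x}, (W ω) ^ 2 ∂μ) ≤ c₁ * x ^ (2 - α + δ)) :
    ∀ t : ℝ, 1 < t → μ {ω | t < W ω} ≤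
      ENNReal.ofReal ((c₁ * 2 ^ (2 - α + δ) * (1 - (2:ℝ) ^ (δ - α))⁻¹) * t ^ (δ - α)) := by
  intro t ht
  have ht0 : (0:ℝ) < t := lt_trans one_pos ht
  -- band bound
  have band : ∀ k : ℕ, μ {ω | 2 ^ k * t < W ω ∧ W ω ≤ 2 ^ (k+1) * t} ≤
      ENNReal.ofReal ((c₁ * 2 ^ (2 - α + δ) * t ^ (δ - α)) * ((2:ℝ) ^ (δ - α)) ^ k) := by
    intro k
    set s : ℝ := 2 ^ k * t with hs
    have hpk : (1:ℝ) ≤ 2 ^ k := one_le_pow₀ (by norm_num)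
    have hs1 : (1:ℝ) < s := by nlinarith
    have hs0 : (0:ℝ) < s := lt_trans one_pos hs1
    have hu1 : (1:ℝ) < 2 * s := by nlinarith
    have hrw : {ω | 2 ^ k * t < W ω ∧ W ω ≤ 2 ^ (k+1) * t} = {ω | s < W ω ∧ W ω ≤ 2 * s} := by
      have : (2:ℝ) ^ (k+1) * t = 2 * s := by rw [hs, pow_succ]; ring
      rw [this]
    rw [hrw]
    set B : Set Ω := {ω | s < W ω ∧ W ω ≤ 2 * s} with hB
    have hBm : MeasurableSet B :=
      (measurableSet_lt measurable_const hW).inter (measurableSet_le hW measurable_const)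
    have hBsub : B ⊆ {ω | W ω ≤ 2 * s} := fun ω hω => hω.2
    have hint2 : IntegrableOn (fun ω => (W ω)^2) {ω | W ω ≤ 2 * s} μ := by
      apply Measure.integrableOn_of_bounded (measure_ne_top _ _)
        ((hW.pow_const 2).aestronglyMeasurable) (M := (2*s)^2)
      filter_upwards [MeasureTheory.self_mem_ae_restrict
        (measurableSet_le hW measurable_const : MeasurableSet {ω | W ω ≤ 2*s}),
        ae_restrict_of_ae hnn] with ω hω hω0
      have hω' : W ω ≤ 2*s := hω
      rw [Real.norm_eq_abs, abs_of_nonneg (sq_nonneg _)]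
      nlinarith [hω', hω0]
    have cheb : s^2 * (μ B).toReal ≤ ∫ ω in B, (W ω)^2 ∂μ := by
      have h1 : ∫ ω in B, s^2 ∂μ ≤ ∫ ω in B, (W ω)^2 ∂μ := by
        apply setIntegral_mono_on (integrableOn_const (measure_ne_top _ _))
          (hint2.mono_set hBsub) hBm
        intro ω hω
        have := hω.1
        nlinarith [hω.1, hs0]
      rw [setIntegral_const, smul_eq_mul, mul_comm] at h1
      exact h1
    have cheb2 : ∫ ω in B, (W ω)^2 ∂μ ≤ c₁ * (2*s) ^ (2 - α + δ) := by
      refine le_trans ?_ (hmom2 (2*s) hu1)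
      apply setIntegral_mono_set hint2 ?_ (Filter.Eventually.of_forall hBsub)
      exact Filter.Eventually.of_forall fun ω => sq_nonneg _
    have hfin : μ B ≠ ⊤ := measure_ne_top _ _
    have key : (μ B).toReal ≤ (c₁ * 2 ^ (2 - α + δ) * t ^ (δ - α)) * ((2:ℝ) ^ (δ - α)) ^ k := by
      have h2s : (2*s) ^ (2 - α + δ) = 2 ^ (2 - α + δ) * s ^ (2 - α + δ) :=
        Real.mul_rpow (by norm_num) hs0.le
      have hsd : s ^ (δ - α) = ((2:ℝ) ^ (δ - α)) ^ k * t ^ (δ - α) := by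
        rw [hs, Real.mul_rpow (by positivity) ht0.le]
        congr 1
        rw [← Real.rpow_natCast (2:ℝ) k, ← Real.rpow_natCast ((2:ℝ) ^ (δ - α)) k,
          ← Real.rpow_mul (by norm_num), ← Real.rpow_mul (by norm_num), mul_comm]
      have hss : s ^ (2 - α + δ) = s ^ 2 * s ^ (δ - α) := by
        rw [← Real.rpow_natCast s 2, ← Real.rpow_add hs0]
        ring_nf
      have h3 : s^2 * (μ B).toReal ≤ c₁ * 2 ^ (2 - α + δ) * (s ^ 2 * s ^ (δ - α)) := by
        calc s^2 * (μ B).toReal ≤ c₁ * (2*s) ^ (2 - α + δ) := le_trans cheb cheb2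
        _ = c₁ * 2 ^ (2 - α + δ) * (s ^ 2 * s ^ (δ - α)) := by rw [h2s, hss]; ring
      have h4 : (μ B).toReal ≤ c₁ * 2 ^ (2 - α + δ) * s ^ (δ - α) := by
        have hs2 : (0:ℝ) < s^2 := by positivity
        nlinarith [h3]
      calc (μ B).toReal ≤ c₁ * 2 ^ (2 - α + δ) * s ^ (δ - α) := h4
      _ = (c₁ * 2 ^ (2 - α + δ) * t ^ (δ - α)) * ((2:ℝ) ^ (δ - α)) ^ k := by rw [hsd]; ring
    calc μ B = ENNReal.ofReal (μ B).toReal := (ENNReal.ofReal_toReal hfin).symm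
    _ ≤ _ := ENNReal.ofReal_le_ofReal key
  -- cover
  have cover : {ω | t < W ω} ⊆ ⋃ k : ℕ, {ω | 2 ^ k * t < W ω ∧ W ω ≤ 2 ^ (k+1) * t} := by
    intro ω hω
    simp only [Set.mem_setOf_eq] at hω
    have hex : ∃ k : ℕ, W ω ≤ 2 ^ (k+1) * t := by
      obtain ⟨k, hk⟩ := pow_unbounded_of_one_lt (W ω / t) (by norm_num : (1:ℝ) < 2)
      refine ⟨k, ?_⟩
      rw [div_lt_iff₀ ht0] at hk
      have h2 : (2:ℝ) ^ k ≤ 2 ^ (k+1) := pow_le_pow_right₀ (by norm_num) (Nat.le_succ k)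
      nlinarith
    classical
    let k₀ := Nat.find hex
    refine Set.mem_iUnion.2 ⟨k₀, ?_, Nat.find_spec hex⟩
    rcases Nat.eq_zero_or_pos k₀ with h0 | hpos
    · simpa [h0] using hω
    · obtain ⟨m, hm⟩ := Nat.exists_eq_succ_of_ne_zero hpos.ne'
      have := Nat.find_min hex (m := m) (by omega)
      push_neg at this
      simpa [hm] using this
  calc μ {ω | t < W ω} ≤ ∑' k : ℕ, μ {ω | 2 ^ k * t < W ω ∧ W ω ≤ 2 ^ (k+1) * t} :=
        le_trans (measure_mono cover) (measure_iUnion_le _)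
  _ ≤ ∑' k : ℕ, ENNReal.ofReal ((c₁ * 2 ^ (2 - α + δ) * t ^ (δ - α)) * ((2:ℝ) ^ (δ - α)) ^ k) :=
        ENNReal.tsum_le_tsum band
  _ ≤ ENNReal.ofReal ((c₁ * 2 ^ (2 - α + δ) * (1 - (2:ℝ) ^ (δ - α))⁻¹) * t ^ (δ - α)) := by
        set r : ℝ := (2:ℝ) ^ (δ - α) with hrdef
        set C : ℝ := c₁ * 2 ^ (2 - α + δ) * t ^ (δ - α) with hCdef
        have hr0 : (0:ℝ) ≤ r := Real.rpow_nonneg (by norm_num) _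
        have hr1 : r < 1 := Real.rpow_lt_one_of_one_lt_of_neg (by norm_num) (by linarith)
        have hC0 : (0:ℝ) ≤ C := by
          have := Real.rpow_nonneg (by norm_num : (0:ℝ) ≤ 2) (2 - α + δ)
          have := Real.rpow_nonneg ht0.le (δ - α)
          positivity
        have heq : ∀ k : ℕ, ENNReal.ofReal (C * r ^ k)
            = ENNReal.ofReal C * (ENNReal.ofReal r) ^ k := by
          intro k
          rw [ENNReal.ofReal_mul hC0, ENNReal.ofReal_pow hr0]
        rw [tsum_congr heq, ENNReal.tsum_mul_left, ENNReal.tsum_geometric]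
        have h1r : (1:ENNReal) - ENNReal.ofReal r = ENNReal.ofReal (1 - r) := by
          rw [ENNReal.ofReal_sub _ hr0, ENNReal.ofReal_one]
        rw [h1r, ← ENNReal.ofReal_inv_of_pos (by linarith), ← ENNReal.ofReal_mul hC0]
        apply ENNReal.ofReal_le_ofReal
        apply le_of_eq
        ring


lemma integrable_rpow_of_tail {Ω : Type*} [MeasurableSpace Ω] (μ : Measure Ω)
    [IsProbabilityMeasure μ] (W : Ω → ℝ) (hW : Measurable W) (hnn : ∀ᵐ ω ∂μ, 0 ≤ W ω)
    (c₂ p β : ℝ) (hβ1 : 1 ≤ β) (hq : β - 1 + p < -1)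
    (htail : ∀ t : ℝ, 1 < t → μ {ω | t < W ω} ≤ ENNReal.ofReal (c₂ * t ^ p)) :
    Integrable (fun ω => W ω ^ β) μ := by
  have hβ0 : (0:ℝ) < β := lt_of_lt_of_le one_pos hβ1
  have key := lintegral_rpow_eq_lintegral_meas_lt_mul μ hnn hW.aemeasurable hβ0
  have hIoi : Ioc (0:ℝ) 1 ∪ Ioi (1:ℝ) = Ioi 0 := Ioc_union_Ioi_eq_Ioi zero_le_one
  have hfinA : ∫⁻ t in Ioc (0:ℝ) 1, μ {a | t < W a} * ENNReal.ofReal (t ^ (β - 1)) < ⊤ := by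
    have hb : ∀ t ∈ Ioc (0:ℝ) 1, μ {a | t < W a} * ENNReal.ofReal (t ^ (β - 1)) ≤ 1 := by
      intro t ht
      calc μ {a | t < W a} * ENNReal.ofReal (t ^ (β - 1))
          ≤ 1 * ENNReal.ofReal 1 := by
            apply mul_le_mul' prob_le_one
            exact ENNReal.ofReal_le_ofReal
              (Real.rpow_le_one ht.1.le ht.2 (by linarith))
        _ = 1 := by simp
    calc ∫⁻ t in Ioc (0:ℝ) 1, μ {a | t < W a} * ENNReal.ofReal (t ^ (β - 1))
        ≤ ∫⁻ _ in Ioc (0:ℝ) 1, 1 := setLIntegral_mono' measurableSet_Ioc hb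
      _ = volume (Ioc (0:ℝ) 1) := by simp
      _ < ⊤ := by simp
  have hfinB : ∫⁻ t in Ioi (1:ℝ), μ {a | t < W a} * ENNReal.ofReal (t ^ (β - 1)) < ⊤ := by
    have hb : ∀ t ∈ Ioi (1:ℝ), μ {a | t < W a} * ENNReal.ofReal (t ^ (β - 1)) ≤
        ENNReal.ofReal (c₂ * t ^ (p + (β - 1))) := by
      intro t ht
      have ht1 : (1:ℝ) < t := ht
      have ht0 : (0:ℝ) < t := lt_trans one_pos ht1
      calc μ {a | t < W a} * ENNReal.ofReal (t ^ (β - 1))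
          ≤ ENNReal.ofReal (c₂ * t ^ p) * ENNReal.ofReal (t ^ (β - 1)) :=
            mul_le_mul' (htail t ht1) le_rfl
        _ = ENNReal.ofReal (c₂ * t ^ p * t ^ (β - 1)) := by
            rw [← ENNReal.ofReal_mul']
            exact Real.rpow_nonneg ht0.le _
        _ = ENNReal.ofReal (c₂ * t ^ (p + (β - 1))) := by
            rw [Real.rpow_add ht0, mul_assoc]
    have hInt : IntegrableOn (fun t : ℝ => c₂ * t ^ (p + (β - 1))) (Ioi (1:ℝ)) volume := by
      have := integrableOn_Ioi_rpow_of_lt (a := p + (β - 1)) (by linarith) one_pos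
      exact this.const_mul c₂
    calc ∫⁻ t in Ioi (1:ℝ), μ {a | t < W a} * ENNReal.ofReal (t ^ (β - 1))
        ≤ ∫⁻ t in Ioi (1:ℝ), ENNReal.ofReal (c₂ * t ^ (p + (β - 1))) :=
          setLIntegral_mono' measurableSet_Ioi hb
      _ ≤ ∫⁻ t in Ioi (1:ℝ), (‖c₂ * t ^ (p + (β - 1))‖₊ : ENNReal) :=
          lintegral_mono fun t => Real.ofReal_le_enorm _
      _ < ⊤ := hInt.2
  have hfin : ∫⁻ ω, ENNReal.ofReal (W ω ^ β) ∂μ < ⊤ := by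
    rw [key]
    apply ENNReal.mul_lt_top ENNReal.ofReal_lt_top
    rw [← hIoi, lintegral_union measurableSet_Ioi (Ioc_disjoint_Ioi le_rfl)]
    exact ENNReal.add_lt_top.2 ⟨hfinA, hfinB⟩
  refine ⟨(by fun_prop : Measurable fun ω => W ω ^ β).aestronglyMeasurable, ?_⟩
  rw [hasFiniteIntegral_iff_norm]
  have : ∀ᵐ ω ∂μ, ENNReal.ofReal ‖W ω ^ β‖ = ENNReal.ofReal (W ω ^ β) := by
    filter_upwards [hnn] with ω hω
    rw [Real.norm_eq_abs, abs_of_nonneg (Real.rpow_nonneg hω _)]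
  rwa [lintegral_congr_ae this]


end Aux

theorem stmt_10 {Ω : Type*} [MeasurableSpace Ω] (μ : Measure Ω) [IsProbabilityMeasure μ]
    (W₁ W₂ : Ω → ℝ) (hW₁ : Measurable W₁) (hW₂ : Measurable W₂)
    (hnn₁ : ∀ᵐ ω ∂μ, 0 ≤ W₁ ω) (hnn₂ : ∀ᵐ ω ∂μ, 0 ≤ W₂ ω)
    (hindep : IndepFun W₁ W₂ μ) (hident : IdentDistrib W₁ W₂ μ μ)
    (c α : ℝ) (hc : 0 < c) (hα1 : 1 < α) (hα2 : α < 2)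
    (h : ℝ → ℝ) (hpos : ∀ᶠ x in atTop, 0 < h x) (hsv : SlowlyVarying h)
    (htail : Tendsto (fun x => (μ {ω | x < W₁ ω}).toReal / (c * x ^ (-α) * h x))
      atTop (𝓝 1))
    (δ : ℝ) (hδ : 0 < δ) (hδα : 2 - α - 1 / α + 2 * δ < 0)
    (c₁ : ℝ) (hc₁ : 0 < c₁)
    (hmom2 : ∀ x : ℝ, 1 < x →
      (∫ ω in {ω | W₁ ω ≤ x}, (W₁ ω) ^ 2 ∂μ) ≤ c₁ * x ^ (2 - α + δ))
    (hmom1 : ∀ x : ℝ, 1 < x →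
      (∫ ω in {ω | x ≤ W₁ ω}, W₁ ω ∂μ) ≤ c₁ * x ^ (1 - α + δ))
    (a : ℕ → ℝ) (ha : ∀ n, 0 < a n)
    (halittle : (fun n : ℕ => 1 / a n) =o[atTop] fun n : ℕ => (n : ℝ) ^ (-(1 / α) + δ)) :
    Tendsto (fun n : ℕ =>
        (1 / a n) * ∫ ω in {ω | W₁ ω * W₂ ω ≤ (n : ℝ)}, (W₁ ω) ^ 2 * (W₂ ω) ^ 2 ∂μ)
      atTop (𝓝 0) := by
  have hα0 : (0:ℝ) < α := lt_trans one_pos hα1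
  have hι : α * (1 / α) = 1 := by field_simp
  have hι0 : (0:ℝ) < 1 / α := by positivity
  have hι1 : 1 / α < 1 := by rw [div_lt_one hα0]; exact hα1
  -- δ < α - 1
  have hδα1 : δ < α - 1 := by nlinarith
  set β : ℝ := (2 + α - 1 / α) / 2 with hβdef
  have hβ1 : 1 < β := by rw [hβdef]; nlinarith
  have hβ2 : β < 2 := by rw [hβdef]; nlinarith
  have hβlt : β < α - δ := by rw [hβdef]; linarith
  have hkey : 2 - β + δ - 1 / α < 0 := by rw [hβdef]; linarith
  have hβ0 : (0:ℝ) < β := lt_trans one_pos hβ1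
  -- tail bound
  set c₂ : ℝ := c₁ * 2 ^ (2 - α + δ) * (1 - (2:ℝ) ^ (δ - α))⁻¹ with hc₂def
  have tail : ∀ t : ℝ, 1 < t → μ {ω | t < W₁ ω} ≤ ENNReal.ofReal (c₂ * t ^ (δ - α)) :=
    tail_bound μ W₁ hW₁ c₁ α δ hc₁ (by linarith) hnn₁ hmom2
  -- integrability of W^β
  have hintZ1 : Integrable (fun ω => W₁ ω ^ β) μ :=
    integrable_rpow_of_tail μ W₁ hW₁ hnn₁ c₂ (δ - α) β hβ1.le (by linarith) tail
  have mg : Measurable fun x : ℝ => x ^ β := by fun_prop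
  have hidZ : IdentDistrib (fun ω => W₁ ω ^ β) (fun ω => W₂ ω ^ β) μ μ := hident.comp mg
  have hintZ2 : Integrable (fun ω => W₂ ω ^ β) μ := hidZ.integrable_iff.1 hintZ1
  have hindZ : IndepFun (fun ω => W₁ ω ^ β) (fun ω => W₂ ω ^ β) μ := hindep.comp mg mg
  have hintProd : Integrable (fun ω => W₁ ω ^ β * W₂ ω ^ β) μ :=
    hindZ.integrable_mul hintZ1 hintZ2
  set M : ℝ := ∫ ω, W₁ ω ^ β ∂μ with hMdef
  have hM0 : 0 ≤ M := by
    apply integral_nonneg_of_ae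
    filter_upwards [hnn₁] with ω hω
    exact Real.rpow_nonneg hω _
  have hMul : (∫ ω, W₁ ω ^ β * W₂ ω ^ β ∂μ) = M * M := by
    have h1 : (∫ ω, W₁ ω ^ β * W₂ ω ^ β ∂μ)
        = (∫ ω, W₁ ω ^ β ∂μ) * ∫ ω, W₂ ω ^ β ∂μ :=
      hindZ.integral_mul_eq_mul_integral hintZ1.1 hintZ2.1
    rw [h1, ← hidZ.integral_eq]
  -- main bound
  have hSm : ∀ n : ℕ, MeasurableSet {ω | W₁ ω * W₂ ω ≤ (n:ℝ)} := fun n =>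
    measurableSet_le (hW₁.mul hW₂) measurable_const
  have hIle : ∀ n : ℕ, 1 ≤ (n:ℝ) →
      (∫ ω in {ω | W₁ ω * W₂ ω ≤ (n:ℝ)}, (W₁ ω) ^ 2 * (W₂ ω) ^ 2 ∂μ)
        ≤ (n:ℝ) ^ (2 - β) * (M * M) := by
    intro n hn
    have hn0 : (0:ℝ) < n := lt_of_lt_of_le one_pos hn
    rw [← integral_indicator (hSm n)]
    have hmono := integral_mono_of_nonneg
      (f := ({ω | W₁ ω * W₂ ω ≤ (n:ℝ)}).indicator fun ω => (W₁ ω) ^ 2 * (W₂ ω) ^ 2)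
      (g := fun ω => (n:ℝ) ^ (2 - β) * (W₁ ω ^ β * W₂ ω ^ β))
      (Eventually.of_forall fun ω => Set.indicator_nonneg (fun ω _ => by positivity) ω)
      (hintProd.const_mul _) ?_
    · calc (∫ ω, ({ω | W₁ ω * W₂ ω ≤ (n:ℝ)}).indicator
            (fun ω => (W₁ ω) ^ 2 * (W₂ ω) ^ 2) ω ∂μ)
          ≤ ∫ ω, (n:ℝ) ^ (2 - β) * (W₁ ω ^ β * W₂ ω ^ β) ∂μ := hmono
        _ = (n:ℝ) ^ (2 - β) * ∫ ω, W₁ ω ^ β * W₂ ω ^ β ∂μ := integral_const_mul _ _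
        _ = (n:ℝ) ^ (2 - β) * (M * M) := by rw [hMul]
    · filter_upwards [hnn₁, hnn₂] with ω h1 h2
      by_cases hω : ω ∈ {ω | W₁ ω * W₂ ω ≤ (n:ℝ)}
      · rw [Set.indicator_of_mem hω]
        have hxy : W₁ ω * W₂ ω ≤ (n:ℝ) := hω
        have hp : 0 ≤ W₁ ω * W₂ ω := mul_nonneg h1 h2
        have key2 : (W₁ ω * W₂ ω) ^ 2 ≤ (n:ℝ) ^ (2 - β) * (W₁ ω * W₂ ω) ^ β := by
          rcases hp.lt_or_eq with hp0 | hp0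
          · have e1 : (W₁ ω * W₂ ω) ^ 2 = (W₁ ω * W₂ ω) ^ ((2:ℝ)) := by
              rw [← Real.rpow_natCast (W₁ ω * W₂ ω) 2]; norm_num
            have e2 : (W₁ ω * W₂ ω) ^ ((2:ℝ)) =
                (W₁ ω * W₂ ω) ^ β * (W₁ ω * W₂ ω) ^ (2 - β) := by
              rw [← Real.rpow_add hp0]; ring_nf
            have e3 : (W₁ ω * W₂ ω) ^ (2 - β) ≤ (n:ℝ) ^ (2 - β) :=
              Real.rpow_le_rpow hp hxy (by linarith)
            have e4 : (0:ℝ) ≤ (W₁ ω * W₂ ω) ^ β := Real.rpow_nonneg hp _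
            rw [e1, e2]
            nlinarith [e3, e4]
          · rw [← hp0, Real.zero_rpow hβ0.ne', mul_zero]
            norm_num
        calc (W₁ ω) ^ 2 * (W₂ ω) ^ 2 = (W₁ ω * W₂ ω) ^ 2 := by ring
          _ ≤ (n:ℝ) ^ (2 - β) * (W₁ ω * W₂ ω) ^ β := key2
          _ = (n:ℝ) ^ (2 - β) * (W₁ ω ^ β * W₂ ω ^ β) := by
              rw [Real.mul_rpow h1 h2]
      · rw [Set.indicator_of_notMem hω]
        have := Real.rpow_nonneg h1 β
        have := Real.rpow_nonneg h2 β
        have : (0:ℝ) ≤ (n:ℝ) ^ (2 - β) := Real.rpow_nonneg hn0.le _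
        positivity
  -- asymptotics
  have hO : (fun n : ℕ => 1 / a n * (n:ℝ) ^ (2 - β)) =O[atTop]
      fun n : ℕ => (n:ℝ) ^ (-(1 / α) + δ) * (n:ℝ) ^ (2 - β) :=
    halittle.isBigO.mul (isBigO_refl _ _)
  have hT : Tendsto (fun n : ℕ => (n:ℝ) ^ (-(1 / α) + δ) * (n:ℝ) ^ (2 - β)) atTop (𝓝 0) := by
    have h1 : Tendsto (fun x : ℝ => x ^ (-(1 / α) + δ + (2 - β))) atTop (𝓝 0) := by
      have := tendsto_rpow_neg_atTop (y := -(-(1 / α) + δ + (2 - β))) (by linarith)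
      simpa using this
    have h2 : Tendsto (fun n : ℕ => ((n:ℝ)) ^ (-(1 / α) + δ + (2 - β))) atTop (𝓝 0) :=
      h1.comp tendsto_natCast_atTop_atTop
    apply h2.congr'
    filter_upwards [eventually_ge_atTop 1] with n hn
    have hn0 : (0:ℝ) < n := by exact_mod_cast Nat.lt_of_lt_of_le Nat.zero_lt_one hn
    rw [Real.rpow_add hn0]
  have hmain : Tendsto (fun n : ℕ => 1 / a n * (n:ℝ) ^ (2 - β)) atTop (𝓝 0) :=
    hO.trans_tendsto hT
  have hbnd : Tendsto (fun n : ℕ => (M * M) * (1 / a n * (n:ℝ) ^ (2 - β))) atTop (𝓝 0) := by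
    have := hmain.const_mul (M * M)
    simpa using this
  apply tendsto_of_tendsto_of_tendsto_of_le_of_le' tendsto_const_nhds hbnd
  · filter_upwards with n
    have h1 : 0 ≤ ∫ ω in {ω | W₁ ω * W₂ ω ≤ (n:ℝ)}, (W₁ ω) ^ 2 * (W₂ ω) ^ 2 ∂μ :=
      setIntegral_nonneg (hSm n) fun ω _ => by positivity
    have h2 : 0 ≤ 1 / a n := div_nonneg zero_le_one (ha n).le
    exact mul_nonneg h2 h1
  · filter_upwards [eventually_ge_atTop 1] with n hn
    have hn1 : (1:ℝ) ≤ n := by exact_mod_cast hn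
    calc 1 / a n * ∫ ω in {ω | W₁ ω * W₂ ω ≤ (n:ℝ)}, (W₁ ω) ^ 2 * (W₂ ω) ^ 2 ∂μ
        ≤ 1 / a n * ((n:ℝ) ^ (2 - β) * (M * M)) := by
          exact mul_le_mul_of_nonneg_left (hIle n hn1) (div_nonneg zero_le_one (ha n).le)
        _ = (M * M) * (1 / a n * (n:ℝ) ^ (2 - β)) := by ring
end

section
/- Under the same setting (W₁, W₂ i.i.d. nonnegative with P(W > x) ~ c·x^{−α}h(x), α ∈ (1,2), E[W·1{W ≥ x}] ≤ c₁·x^{1−α+δ} for x > 1, δ > 0 with 2 − α − 1/α + 2δ < 0, and 1/aₙ = o(n^{−1/α+δ})), one has (n/aₙ)·E[W₁W₂·1{W₁W₂ > n}] → 0 as n → ∞. -/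
open MeasureTheory ProbabilityTheory Filter Topology Asymptotics
open scoped ENNReal NNReal

set_option maxHeartbeats 2000000 in
theorem stmt_11 {Ω : Type*} [MeasurableSpace Ω] (μ : Measure Ω) [IsProbabilityMeasure μ]
    (W₁ W₂ : Ω → ℝ) (hW₁ : Measurable W₁) (hW₂ : Measurable W₂)
    (hnn₁ : ∀ᵐ ω ∂μ, 0 ≤ W₁ ω) (hnn₂ : ∀ᵐ ω ∂μ, 0 ≤ W₂ ω)
    (hindep : IndepFun W₁ W₂ μ) (hident : IdentDistrib W₁ W₂ μ μ)
    (hint : Integrable W₁ μ)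
    (c α : ℝ) (hc : 0 < c) (hα1 : 1 < α) (hα2 : α < 2)
    (h : ℝ → ℝ) (hpos : ∀ᶠ x in atTop, 0 < h x) (hsv : SlowlyVarying h)
    (htail : Tendsto (fun x => (μ {ω | x < W₁ ω}).toReal / (c * x ^ (-α) * h x))
      atTop (𝓝 1))
    (δ : ℝ) (hδ : 0 < δ) (hδα : 2 - α - 1 / α + 2 * δ < 0)
    (c₁ : ℝ) (hc₁ : 0 < c₁)
    (hmom1 : ∀ x : ℝ, 1 < x →
      (∫ ω in {ω | x ≤ W₁ ω}, W₁ ω ∂μ) ≤ c₁ * x ^ (1 - α + δ))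
    (a : ℕ → ℝ) (ha : ∀ n, 0 < a n)
    (halittle : (fun n : ℕ => 1 / a n) =o[atTop] fun n : ℕ => (n : ℝ) ^ (-(1 / α) + δ)) :
    Tendsto (fun n : ℕ =>
        ((n : ℝ) / a n) * ∫ ω in {ω | (n : ℝ) < W₁ ω * W₂ ω}, W₁ ω * W₂ ω ∂μ)
      atTop (𝓝 0) := by
  classical
  have hα0 : (0:ℝ) < α := by linarith
  have hinvα : 1/α < 1 := by rw [div_lt_one hα0]; linarith
  have hδα1 : δ < α - 1 := by linarith
  -- choice of r and ε
  set H : ℝ := 2 - α - 1/α + 2*δ with hHdef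
  have hH : H < 0 := hδα
  set r : ℕ := ⌈(α - δ - 1)/(-H)⌉₊ + 1 with hrdef
  have hr0 : 0 < r := Nat.succ_pos _
  have hrR : (0:ℝ) < r := by exact_mod_cast hr0
  set ε : ℝ := (α - δ - 1)/r with hεdef
  have hε0 : 0 ≤ ε := div_nonneg (by linarith) hrR.le
  have hεH : ε < -H := by
    have h1 : (α - δ - 1)/(-H) < r := by
      calc (α - δ - 1)/(-H) ≤ (⌈(α - δ - 1)/(-H)⌉₊ : ℝ) := Nat.le_ceil _
        _ < r := by rw [hrdef]; push_cast; linarith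
    rw [hεdef, div_lt_iff₀ hrR]
    rw [div_lt_iff₀ (by linarith : (0:ℝ) < -H)] at h1
    linarith
  -- the law ν
  set ν : Measure ℝ := μ.map W₁ with hνdef
  haveI : IsProbabilityMeasure ν := Measure.isProbabilityMeasure_map hW₁.aemeasurable
  have hν₂ : μ.map W₂ = ν := hident.map_eq.symm
  have hid_int : Integrable (fun x : ℝ => x) ν := by
    rw [hνdef]
    exact (integrable_map_measure aestronglyMeasurable_id hW₁.aemeasurable).mpr hint
  have hνnn : ∀ᵐ x ∂ν, 0 ≤ x := by
    rw [hνdef, ae_map_iff hW₁.aemeasurable (measurableSet_Ici : MeasurableSet (Set.Ici (0:ℝ)))]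
    exact hnn₁
  set m : ℝ := ∫ x, x ∂ν with hmdef
  have hm0 : 0 ≤ m := integral_nonneg_of_ae hνnn
  have Lm : ∫⁻ y, ENNReal.ofReal y ∂ν = ENNReal.ofReal m :=
    (ofReal_integral_eq_lintegral_ofReal hid_int hνnn).symm
  have gbound : ∀ x : ℝ, 1 < x → ∫ t in Set.Ici x, t ∂ν ≤ c₁ * x ^ (1 - α + δ) := by
    intro x hx
    rw [hνdef, setIntegral_map (f := fun y : ℝ => y) measurableSet_Ici
      aestronglyMeasurable_id hW₁.aemeasurable]
    exact hmom1 x hx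
  have tb : ∀ s : ℝ, 1 < s →
      ∫⁻ y in Set.Ici s, ENNReal.ofReal y ∂ν ≤ ENNReal.ofReal (c₁ * s ^ (1 - α + δ)) := by
    intro s hs
    rw [← ofReal_integral_eq_lintegral_ofReal hid_int.restrict (ae_restrict_of_ae hνnn)]
    exact ENNReal.ofReal_le_ofReal (gbound s hs)
  have hprod : μ.map (fun ω => (W₁ ω, W₂ ω)) = ν.prod ν := by
    rw [(indepFun_iff_map_prod_eq_prod_map_map hW₁.aemeasurable hW₂.aemeasurable).mp hindep,
      hν₂]
  set C : ℝ := c₁ * (m + r*(m+c₁)) with hCdef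
  have hC0 : 0 ≤ C := by
    apply mul_nonneg hc₁.le
    nlinarith [hm0, hrR, hc₁.le]
  -- auxiliary rpow inequality
  have aux : ∀ x q : ℝ, 0 ≤ x → x ≤ q → 1 ≤ q → x ^ (α-δ) ≤ x * q ^ (α-δ-1) := by
    intro x q hx hxq hq
    rcases eq_or_lt_of_le hx with h0 | h0
    · rw [← h0, Real.zero_rpow (by linarith : α-δ ≠ 0), zero_mul]
    rcases le_or_gt x 1 with hx1 | hx1
    · calc x ^ (α-δ) ≤ x ^ (1:ℝ) :=
            Real.rpow_le_rpow_of_exponent_ge h0 hx1 (by linarith)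
        _ = x := Real.rpow_one x
        _ ≤ x * q ^ (α-δ-1) :=
            le_mul_of_one_le_right hx (Real.one_le_rpow hq (by linarith))
    · have hxx : x ^ (α-δ) = x * x ^ (α-δ-1) := by
        rw [← Real.rpow_one_add' h0.le (by linarith : 1 + (α-δ-1) ≠ 0)]
        congr 1; ring
      rw [hxx]
      exact mul_le_mul_of_nonneg_left
        (Real.rpow_le_rpow (by linarith) hxq (by linarith)) hx
  -- key bound
  have key : ∀ n : ℕ, 2 ≤ n →
      (∫ ω in {ω | (n : ℝ) < W₁ ω * W₂ ω}, W₁ ω * W₂ ω ∂μ) ≤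
        C * (n : ℝ) ^ (1 - α + δ + ε) := by
    intro n hn
    set N : ℝ := (n : ℝ) with hNdef
    have hN2 : (2:ℝ) ≤ N := by rw [hNdef]; exact_mod_cast hn
    have hN1 : (1:ℝ) < N := by linarith
    have hN0 : (0:ℝ) < N := by linarith
    set S : Set Ω := {ω | N < W₁ ω * W₂ ω} with hSdef
    have hS : MeasurableSet S := measurableSet_lt measurable_const (hW₁.mul hW₂)
    set G : ℝ × ℝ → ℝ≥0∞ :=
      fun p => Set.indicator {q : ℝ × ℝ | N < q.1 * q.2}
        (fun q => ENNReal.ofReal (q.1 * q.2)) p with hGdef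
    have hGm : Measurable G :=
      ((measurable_fst.mul measurable_snd).ennreal_ofReal).indicator
        (measurableSet_lt measurable_const (measurable_fst.mul measurable_snd))
    -- the Bochner integral as a lintegral
    have hT : (∫ ω in S, W₁ ω * W₂ ω ∂μ) =
        (∫⁻ ω in S, ENNReal.ofReal (W₁ ω * W₂ ω) ∂μ).toReal := by
      apply integral_eq_lintegral_of_nonneg_ae
      · refine (ae_restrict_iff' hS).mpr (Filter.Eventually.of_forall fun ω hω => ?_)
        exact le_of_lt (lt_of_le_of_lt hN0.le hω)
      · exact ((hW₁.mul hW₂).aestronglyMeasurable).restrict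
    -- transfer to product measure
    have hlin : ∫⁻ ω in S, ENNReal.ofReal (W₁ ω * W₂ ω) ∂μ =
        ∫⁻ x, ∫⁻ y, G (x, y) ∂ν ∂ν := by
      have h1 : ∫⁻ ω in S, ENNReal.ofReal (W₁ ω * W₂ ω) ∂μ =
          ∫⁻ ω, G (W₁ ω, W₂ ω) ∂μ := by
        rw [← lintegral_indicator hS]
        refine lintegral_congr fun ω => ?_
        simp only [hGdef, hSdef, Set.indicator_apply, Set.mem_setOf_eq]
      rw [h1, ← lintegral_map hGm (hW₁.prodMk hW₂), hprod,
        lintegral_prod G hGm.aemeasurable]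
    -- pointwise bound on the inner integral
    have hmul_le : ∀ x : ℝ, 0 ≤ x → ∀ y : ℝ,
        G (x, y) ≤ ENNReal.ofReal x * ENNReal.ofReal y := by
      intro x hx y
      rw [hGdef]
      calc Set.indicator {q : ℝ × ℝ | N < q.1 * q.2}
            (fun q => ENNReal.ofReal (q.1 * q.2)) (x, y)
          ≤ ENNReal.ofReal (x * y) := Set.indicator_le_self _ _ _
        _ = ENNReal.ofReal x * ENNReal.ofReal y := ENNReal.ofReal_mul hx
    have inner_bound : ∀ x : ℝ, 0 ≤ x → (∫⁻ y, G (x, y) ∂ν) ≤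
        (Set.Ici N).indicator (fun x => ENNReal.ofReal (m * x)) x +
        (Set.Iio N).indicator
          (fun x => ENNReal.ofReal ((c₁ * N ^ (1-α+δ)) * x ^ (α-δ))) x := by
      intro x hx
      by_cases hxN : N ≤ x
      · rw [Set.indicator_of_mem (Set.mem_Ici.mpr hxN),
          Set.indicator_of_notMem (fun hh => absurd (Set.mem_Iio.mp hh) (not_lt.mpr hxN)),
          add_zero]
        calc ∫⁻ y, G (x, y) ∂ν ≤ ∫⁻ y, ENNReal.ofReal x * ENNReal.ofReal y ∂ν :=
              lintegral_mono (hmul_le x hx)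
          _ = ENNReal.ofReal x * ENNReal.ofReal m := by
              rw [lintegral_const_mul _ measurable_id'.ennreal_ofReal, Lm]
          _ = ENNReal.ofReal (m * x) := by
              rw [← ENNReal.ofReal_mul hx, mul_comm]
      · push_neg at hxN
        rw [Set.indicator_of_notMem (fun hh => absurd (Set.mem_Ici.mp hh) (not_le.mpr hxN)),
          Set.indicator_of_mem (Set.mem_Iio.mpr hxN), zero_add]
        rcases eq_or_lt_of_le hx with h0 | h0
        · have hz : (fun y : ℝ => G (x, y)) = fun _ => 0 := by
            funext y
            apply Set.indicator_of_notMem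
            simp only [Set.mem_setOf_eq, not_lt, ← h0, zero_mul]
            linarith
          rw [hz, lintegral_zero]
          exact zero_le
        · have hdiv : 1 < N / x := (one_lt_div h0).mpr hxN
          have hpt : ∀ y : ℝ, G (x, y) ≤
              ENNReal.ofReal x *
                (Set.Ici (N/x)).indicator (fun y => ENNReal.ofReal y) y := by
            intro y
            by_cases hy : (x, y) ∈ {q : ℝ × ℝ | N < q.1 * q.2}
            · have hy' : N < x * y := hy
              have hyx : N / x ≤ y :=
                le_of_lt ((div_lt_iff₀ h0).mpr (by linarith [hy']))
              have e1 : G (x, y) = ENNReal.ofReal (x * y) := by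
                rw [hGdef]; exact Set.indicator_of_mem hy _
              rw [e1, Set.indicator_of_mem (Set.mem_Ici.mpr hyx),
                ← ENNReal.ofReal_mul h0.le]
            · have e1 : G (x, y) = 0 := by
                rw [hGdef]; exact Set.indicator_of_notMem hy _
              rw [e1]
              exact zero_le
          calc ∫⁻ y, G (x, y) ∂ν
              ≤ ∫⁻ y, ENNReal.ofReal x *
                  (Set.Ici (N/x)).indicator (fun y => ENNReal.ofReal y) y ∂ν :=
                lintegral_mono hpt
            _ = ENNReal.ofReal x * ∫⁻ y in Set.Ici (N/x), ENNReal.ofReal y ∂ν := by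
                rw [lintegral_const_mul _
                  (measurable_id'.ennreal_ofReal.indicator measurableSet_Ici),
                  lintegral_indicator measurableSet_Ici]
            _ ≤ ENNReal.ofReal x * ENNReal.ofReal (c₁ * (N/x) ^ (1-α+δ)) :=
                mul_le_mul_right (tb _ hdiv) _
            _ = ENNReal.ofReal ((c₁ * N ^ (1-α+δ)) * x ^ (α-δ)) := by
                rw [← ENNReal.ofReal_mul h0.le]
                congr 1
                have hx1 : x = x^(α-δ) * x^(1-α+δ) := by
                  rw [← Real.rpow_add h0, show (α-δ)+(1-α+δ) = 1 by ring,
                    Real.rpow_one]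
                rw [Real.div_rpow hN0.le h0.le]
                rw [div_eq_mul_inv]
                nth_rewrite 1 [hx1]
                have hxne : x^(1-α+δ) ≠ 0 := ne_of_gt (Real.rpow_pos_of_pos h0 _)
                field_simp
    -- blocks bound for the truncated moment
    set p : ℕ → ℝ := fun k => if k = 0 then 0 else N ^ ((k:ℝ)/r) with hpdef
    have hp1 : ∀ k : ℕ, 1 ≤ p (k+1) := by
      intro k
      rw [hpdef]
      simp only [Nat.succ_ne_zero, if_false]
      exact Real.one_le_rpow hN1.le (div_nonneg (by positivity) hrR.le)
    have hcover : ∀ x : ℝ, 0 ≤ x → x < N →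
        ENNReal.ofReal (x ^ (α-δ)) ≤ ∑ k ∈ Finset.range r,
          (Set.Ico (p k) (p (k+1))).indicator
            (fun x => ENNReal.ofReal (x * (p (k+1)) ^ (α-δ-1))) x := by
      intro x hx hxN
      obtain ⟨k, hkr, hk1, hk2⟩ : ∃ k, k < r ∧ p k ≤ x ∧ x < p (k+1) := by
        set P : ℕ → Prop := fun j => p j ≤ x with hPdef
        set k : ℕ := Nat.findGreatest P (r-1) with hkdef
        have hkr : k < r := lt_of_le_of_lt (Nat.findGreatest_le _) (Nat.sub_lt hr0 one_pos)
        have hk1 : p k ≤ x := by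
          have : P 0 := by rw [hPdef]; simp [hpdef]; exact hx
          exact Nat.findGreatest_spec (Nat.zero_le _) this
        have hk2 : x < p (k+1) := by
          by_cases hkk : k + 1 ≤ r - 1
          · by_contra hcon
            push_neg at hcon
            exact Nat.findGreatest_is_greatest (Nat.lt_succ_self k) hkk hcon
          · have hkr1 : k + 1 = r := by omega
            rw [hkr1]
            simp only [hpdef, if_neg (by omega : r ≠ 0)]
            rw [div_self (by exact_mod_cast hr0.ne' : (r:ℝ) ≠ 0), Real.rpow_one]
            exact hxN
        exact ⟨k, hkr, hk1, hk2⟩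
      calc ENNReal.ofReal (x ^ (α-δ))
          ≤ (Set.Ico (p k) (p (k+1))).indicator
              (fun x => ENNReal.ofReal (x * (p (k+1)) ^ (α-δ-1))) x := by
            rw [Set.indicator_of_mem (Set.mem_Ico.mpr ⟨hk1, hk2⟩)]
            exact ENNReal.ofReal_le_ofReal (aux x (p (k+1)) hx hk2.le (hp1 k))
        _ ≤ _ := Finset.single_le_sum
            (f := fun j => (Set.Ico (p j) (p (j+1))).indicator
              (fun x => ENNReal.ofReal (x * (p (j+1)) ^ (α-δ-1))) x)
            (fun i _ => zero_le) (Finset.mem_range.mpr hkr)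
    have hterm : ∀ k ∈ Finset.range r,
        (∫⁻ x, (Set.Ico (p k) (p (k+1))).indicator
            (fun x => ENNReal.ofReal (x * (p (k+1)) ^ (α-δ-1))) x ∂ν) ≤
          ENNReal.ofReal ((m + c₁) * N ^ ε) := by
      intro k _
      rw [lintegral_indicator measurableSet_Ico]
      have hck0 : (0:ℝ) ≤ (p (k+1)) ^ (α-δ-1) :=
        Real.rpow_nonneg (le_trans zero_le_one (hp1 k)) _
      have hsplit : ∀ x : ℝ, ENNReal.ofReal (x * (p (k+1)) ^ (α-δ-1)) =
          ENNReal.ofReal ((p (k+1)) ^ (α-δ-1)) * ENNReal.ofReal x := by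
        intro x
        rw [mul_comm x, ENNReal.ofReal_mul hck0]
      simp_rw [hsplit]
      rw [lintegral_const_mul _ measurable_id'.ennreal_ofReal]
      have hpk1 : p (k+1) = N ^ (((k:ℝ)+1)/r) := by
        simp only [hpdef, Nat.succ_ne_zero, if_false]; push_cast; ring_nf
      by_cases hk : k = 0
      · subst hk
        have hc0 : (p 1) ^ (α-δ-1) = N ^ ε := by
          rw [hpk1, ← Real.rpow_mul hN0.le]
          congr 1
          rw [hεdef]; push_cast; ring
        calc ENNReal.ofReal ((p 1) ^ (α-δ-1)) *
              ∫⁻ x in Set.Ico (p 0) (p 1), ENNReal.ofReal x ∂ν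
            ≤ ENNReal.ofReal (N ^ ε) * ENNReal.ofReal m := by
              rw [hc0]
              refine mul_le_mul_right ?_ _
              rw [← Lm]
              exact lintegral_mono' Measure.restrict_le_self le_rfl
          _ = ENNReal.ofReal (N ^ ε * m) := (ENNReal.ofReal_mul (by positivity)).symm
          _ ≤ ENNReal.ofReal ((m + c₁) * N ^ ε) := by
              apply ENNReal.ofReal_le_ofReal
              nlinarith [Real.rpow_nonneg hN0.le ε]
      · have hk1' : 1 ≤ k := Nat.one_le_iff_ne_zero.mpr hk
        have hpk : p k = N ^ ((k:ℝ)/r) := by simp only [hpdef, if_neg hk]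
        have hpk_gt : 1 < p k := by
          rw [hpk]
          apply (Real.one_lt_rpow_iff_of_pos hN0).mpr
          exact Or.inl ⟨hN1, div_pos (by exact_mod_cast hk1') hrR⟩
        calc ENNReal.ofReal ((p (k+1)) ^ (α-δ-1)) *
              ∫⁻ x in Set.Ico (p k) (p (k+1)), ENNReal.ofReal x ∂ν
            ≤ ENNReal.ofReal ((p (k+1)) ^ (α-δ-1)) *
              ENNReal.ofReal (c₁ * (p k) ^ (1-α+δ)) := by
              refine mul_le_mul_right ?_ _
              refine le_trans (lintegral_mono' (Measure.restrict_mono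
                Set.Ico_subset_Ici_self le_rfl) le_rfl) (tb _ hpk_gt)
          _ = ENNReal.ofReal ((p (k+1)) ^ (α-δ-1) * (c₁ * (p k) ^ (1-α+δ))) :=
              (ENNReal.ofReal_mul hck0).symm
          _ ≤ ENNReal.ofReal ((m + c₁) * N ^ ε) := by
              apply ENNReal.ofReal_le_ofReal
              have heq : (p (k+1)) ^ (α-δ-1) * (p k) ^ (1-α+δ) = N ^ ε := by
                rw [hpk1, hpk, ← Real.rpow_mul hN0.le, ← Real.rpow_mul hN0.le,
                  ← Real.rpow_add hN0]
                congr 1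
                rw [hεdef]
                field_simp
                ring
              calc (p (k+1)) ^ (α-δ-1) * (c₁ * (p k) ^ (1-α+δ))
                  = c₁ * ((p (k+1)) ^ (α-δ-1) * (p k) ^ (1-α+δ)) := by ring
                _ = c₁ * N ^ ε := by rw [heq]
                _ ≤ (m + c₁) * N ^ ε := by
                    apply mul_le_mul_of_nonneg_right (by linarith) (by positivity)
    have hJ : (∫⁻ x in Set.Iio N, ENNReal.ofReal (x ^ (α-δ)) ∂ν) ≤
        (r : ℝ≥0∞) * ENNReal.ofReal ((m + c₁) * N ^ ε) := by
      calc ∫⁻ x in Set.Iio N, ENNReal.ofReal (x ^ (α-δ)) ∂ν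
          ≤ ∫⁻ x in Set.Iio N, ∑ k ∈ Finset.range r,
              (Set.Ico (p k) (p (k+1))).indicator
                (fun x => ENNReal.ofReal (x * (p (k+1)) ^ (α-δ-1))) x ∂ν := by
            apply lintegral_mono_ae
            filter_upwards [ae_restrict_of_ae hνnn, ae_restrict_mem measurableSet_Iio]
              with x hx hxN
            exact hcover x hx hxN
        _ ≤ ∫⁻ x, ∑ k ∈ Finset.range r,
              (Set.Ico (p k) (p (k+1))).indicator
                (fun x => ENNReal.ofReal (x * (p (k+1)) ^ (α-δ-1))) x ∂ν :=
            lintegral_mono' Measure.restrict_le_self le_rfl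
        _ = ∑ k ∈ Finset.range r, ∫⁻ x,
              (Set.Ico (p k) (p (k+1))).indicator
                (fun x => ENNReal.ofReal (x * (p (k+1)) ^ (α-δ-1))) x ∂ν :=
            lintegral_finset_sum _ (fun k _ =>
              ((measurable_id.mul measurable_const).ennreal_ofReal).indicator
                measurableSet_Ico)
        _ ≤ ∑ _k ∈ Finset.range r, ENNReal.ofReal ((m + c₁) * N ^ ε) :=
            Finset.sum_le_sum hterm
        _ = (r : ℝ≥0∞) * ENNReal.ofReal ((m + c₁) * N ^ ε) := by
            rw [Finset.sum_const, Finset.card_range, nsmul_eq_mul]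
    -- assemble
    have hmain : ∫⁻ x, ∫⁻ y, G (x, y) ∂ν ∂ν ≤
        ENNReal.ofReal (C * N ^ (1 - α + δ + ε)) := by
      calc ∫⁻ x, ∫⁻ y, G (x, y) ∂ν ∂ν
          ≤ ∫⁻ x, ((Set.Ici N).indicator (fun x => ENNReal.ofReal (m * x)) x +
              (Set.Iio N).indicator
                (fun x => ENNReal.ofReal ((c₁ * N ^ (1-α+δ)) * x ^ (α-δ))) x) ∂ν :=
            lintegral_mono_ae (hνnn.mono fun x hx => inner_bound x hx)
        _ = (∫⁻ x, (Set.Ici N).indicator (fun x => ENNReal.ofReal (m * x)) x ∂ν) +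
            (∫⁻ x, (Set.Iio N).indicator
                (fun x => ENNReal.ofReal ((c₁ * N ^ (1-α+δ)) * x ^ (α-δ))) x ∂ν) :=
            lintegral_add_left
              (((measurable_const.mul measurable_id).ennreal_ofReal).indicator
                measurableSet_Ici) _
        _ ≤ ENNReal.ofReal (m * (c₁ * N ^ (1-α+δ))) +
            ENNReal.ofReal (c₁ * N ^ (1-α+δ)) *
              ((r : ℝ≥0∞) * ENNReal.ofReal ((m + c₁) * N ^ ε)) := by
            apply add_le_add
            · rw [lintegral_indicator measurableSet_Ici]
              simp_rw [ENNReal.ofReal_mul hm0]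
              rw [lintegral_const_mul _ measurable_id'.ennreal_ofReal]
              exact mul_le_mul_right (tb N hN1) _
            · rw [lintegral_indicator measurableSet_Iio]
              simp_rw [ENNReal.ofReal_mul (by positivity : (0:ℝ) ≤ c₁ * N ^ (1-α+δ))]
              rw [lintegral_const_mul _ ((measurable_id'.pow measurable_const).ennreal_ofReal)]
              exact mul_le_mul_right hJ _
        _ ≤ ENNReal.ofReal (C * N ^ (1 - α + δ + ε)) := by
            rw [← ENNReal.ofReal_natCast r, ← ENNReal.ofReal_mul (by positivity),
              ← ENNReal.ofReal_mul (by positivity),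
              ← ENNReal.ofReal_add (mul_nonneg hm0 (by positivity)) (by positivity)]
            apply ENNReal.ofReal_le_ofReal
            have h3 : N ^ (1-α+δ+ε) = N ^ (1-α+δ) * N ^ ε := by
              rw [← Real.rpow_add hN0]
            rw [h3]
            have h1 : (1:ℝ) ≤ N ^ ε := Real.one_le_rpow hN1.le hε0
            have h2 : (0:ℝ) < N ^ (1-α+δ) := Real.rpow_pos_of_pos hN0 _
            rw [hCdef]
            nlinarith [mul_nonneg (mul_nonneg (mul_nonneg hc₁.le hm0) h2.le)
              (sub_nonneg.mpr h1), hrR.le, hm0, hc₁.le, h2.le,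
              mul_nonneg hm0 h2.le]
    rw [hT, hlin]
    calc (∫⁻ x, ∫⁻ y, G (x, y) ∂ν ∂ν).toReal
        ≤ (ENNReal.ofReal (C * N ^ (1 - α + δ + ε))).toReal :=
          ENNReal.toReal_mono ENNReal.ofReal_ne_top hmain
      _ = C * N ^ (1 - α + δ + ε) := ENNReal.toReal_ofReal (mul_nonneg hC0 (Real.rpow_nonneg hN0.le _))
  -- final limit
  set e₁ : ℝ := 1 - α + δ + ε with he₁def
  set e₂ : ℝ := e₁ + 1 - 1/α + δ with he₂def
  have he₂neg : e₂ < 0 := by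
    have : e₂ = H + ε := by rw [he₂def, he₁def, hHdef]; ring
    linarith
  have hA : Tendsto (fun n : ℕ => (1 / a n) * (n:ℝ) ^ (1/α - δ)) atTop (𝓝 0) := by
    have h0 := halittle.tendsto_div_nhds_zero
    apply h0.congr'
    filter_upwards [eventually_ge_atTop 1] with n hn
    have hn0 : (0:ℝ) < n := by exact_mod_cast hn
    rw [show -(1/α) + δ = -(1/α - δ) by ring, Real.rpow_neg hn0.le, div_eq_mul_inv,
      inv_inv]
  have hB : Tendsto (fun n : ℕ => (n:ℝ) ^ e₂) atTop (𝓝 0) := by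
    have := (tendsto_rpow_neg_atTop (show (0:ℝ) < -e₂ by linarith)).comp
      tendsto_natCast_atTop_atTop (α := ℕ)
    simpa [Function.comp_def] using this
  have hbnd : Tendsto (fun n : ℕ =>
      C * ((1 / a n * (n:ℝ) ^ (1/α - δ)) * (n:ℝ) ^ e₂)) atTop (𝓝 0) := by
    have := (hA.mul hB).const_mul C
    simpa using this
  apply tendsto_of_tendsto_of_tendsto_of_le_of_le' tendsto_const_nhds hbnd
  · filter_upwards with n
    apply mul_nonneg (div_nonneg (Nat.cast_nonneg n) (ha n).le)
    apply setIntegral_nonneg (measurableSet_lt measurable_const (hW₁.mul hW₂))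
    intro ω hω
    exact le_of_lt (lt_of_le_of_lt (Nat.cast_nonneg n) hω)
  · filter_upwards [eventually_ge_atTop 2] with n hn
    have hn0 : (0:ℝ) < n := by
      have : (2:ℝ) ≤ n := by exact_mod_cast hn
      linarith
    calc ((n : ℝ) / a n) * ∫ ω in {ω | (n : ℝ) < W₁ ω * W₂ ω}, W₁ ω * W₂ ω ∂μ
        ≤ ((n : ℝ) / a n) * (C * (n:ℝ) ^ e₁) :=
          mul_le_mul_of_nonneg_left (key n hn)
            (div_nonneg (Nat.cast_nonneg n) (ha n).le)
      _ = C * ((1 / a n * (n:ℝ) ^ (1/α - δ)) * (n:ℝ) ^ e₂) := by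
          have h4 : (n:ℝ) ^ (1/α - δ) * (n:ℝ) ^ e₂ = (n:ℝ) * (n:ℝ) ^ e₁ := by
            rw [← Real.rpow_add hn0, show 1/α - δ + e₂ = 1 + e₁ by
              rw [he₂def]; ring, Real.rpow_add hn0, Real.rpow_one]
          rw [mul_assoc (1 / a n), h4]
          ring
end
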